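/- There exists a class ℒ of recursive languages such that ℒ ∈ [TxtSdEx_C]_REC but ℒ ∉ [TxtItEx_C]_REC; that is, some partial computable set-driven learner Ex_C-learns every member of ℒ, but no partial computable iterative learner Ex_C-learns every member of ℒ. -/

import Mathlib

namespace InductiveInference

/-- `φ_e` : the `e`-th partial computable function, via the standard numbering
of `Nat.Partrec.Code`. -/
def phi (e : ℕ) : ℕ →. ℕ := (Denumerable.ofNat Nat.Partrec.Code e).eval

/-- `W_e` : the domain of `φ_e`. -/
def Wset (e : ℕ) : Set ℕ := (phi e).Dom

/-- `e` is a C-index: `φ_e` is total with values in `{0,1}`. -/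
def CIndex (e : ℕ) : Prop := ∀ x, phi e x = Part.some 0 ∨ phi e x = Part.some 1

/-- `C_e = {x | φ_e x = 1}`. -/
def Cset (e : ℕ) : Set ℕ := {x | phi e x = Part.some 1}

/-- A language is recursive (decidable). -/
def RecLang (L : Set ℕ) : Prop := ∃ f : ℕ → Bool, Computable f ∧ ∀ x, x ∈ L ↔ f x = true

/-- Texts: total functions `ℕ → ℕ ∪ {#}`; `none` is the pause symbol `#`. -/
abbrev Text := ℕ → Option ℕ

/-- The content of a text: its range minus the pause symbol. -/
def content (T : Text) : Set ℕ := {x | ∃ n, T n = some x}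

/-- The initial segment `T[n] = (T 0, …, T (n-1))`. -/
def initSeg (T : Text) (n : ℕ) : List (Option ℕ) := (List.range n).map T

/-- The (finite) content of the initial segment `T[n]`. -/
def fincontent (T : Text) (n : ℕ) : Finset ℕ := ((initSeg T n).filterMap id).toFinset

/-- A canonical numerical code for a finite set of naturals. -/
def setCode (D : Finset ℕ) : ℕ := Encodable.encode (D.sort (· ≤ ·))

/-- Learners: partial functions on (suitably coded) natural number inputs. -/
abbrev Learner := ℕ →. ℕ

/-- The learner is partial computable. -/
def PartComputable (h : Learner) : Prop := Nat.Partrec h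

/-- The learner is total computable. -/
def TotalComputable (h : Learner) : Prop := Nat.Partrec h ∧ ∀ x, (h x).Dom

/-- Hypothesis sequences (possibly undefined at some points). -/
abbrev HypSeq := ℕ → Part ℕ

/-- Gold-style (full-information) learning: `G(h,T)(i) = h(T[i])`. -/
def Gop (h : Learner) (T : Text) (i : ℕ) : Part ℕ :=
  h (Encodable.encode (initSeg T i))

/-- Partially set-driven learning: `Psd(h,T)(i) = h(content T[i], i)`. -/
def Psdop (h : Learner) (T : Text) (i : ℕ) : Part ℕ :=
  h (Nat.pair (setCode (fincontent T i)) i)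

/-- Set-driven learning: `Sd(h,T)(i) = h(content T[i])`. -/
def Sdop (h : Learner) (T : Text) (i : ℕ) : Part ℕ :=
  h (setCode (fincontent T i))

/-- Iterative learning: the input `none` codes the empty start sequence `ε`,
and `some (e, x)` codes the pair of previous hypothesis `e` and datum `x`. -/
def Itop (h : Learner) (T : Text) : ℕ → Part ℕ
  | 0 => h (Encodable.encode (none : Option (ℕ × Option ℕ)))
  | i + 1 => (Itop h T i).bind fun e =>
      h (Encodable.encode (some (e, T i) : Option (ℕ × Option ℕ)))

/-- Transductive learning: the learner receives the single (coded) datum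
`T i`; the output `0` codes the distinguished symbol `?`, and the output
`e + 1` codes the hypothesis `e`.  The value `?` of the hypothesis sequence
is represented by `Part.none`. -/
def Tdop (h : Learner) (T : Text) : ℕ → Part ℕ
  | 0 => Part.none
  | i + 1 => (h (Encodable.encode (T i))).bind fun v =>
      match v with
      | 0 => Tdop h T i
      | e + 1 => Part.some e

/-- `Ex_C`: syntactic convergence to a single correct C-index. -/
def ExC (p : HypSeq) (T : Text) : Prop :=
  ∃ n₀, (∀ n, n₀ ≤ n → p n = p n₀) ∧
    ∃ e, p n₀ = Part.some e ∧ CIndex e ∧ Cset e = content T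

/-- `Ex_W`: syntactic convergence to a single correct W-index. -/
def ExW (p : HypSeq) (T : Text) : Prop :=
  ∃ n₀, (∀ n, n₀ ≤ n → p n = p n₀) ∧
    ∃ e, p n₀ = Part.some e ∧ Wset e = content T

/-- `Bc_C`: semantic convergence to correct C-indices. -/
def BcC (p : HypSeq) (T : Text) : Prop :=
  ∃ n₀, ∀ n, n₀ ≤ n → ∃ e, p n = Part.some e ∧ CIndex e ∧ Cset e = content T

/-- `Bc_W`: semantic convergence to correct W-indices. -/
def BcW (p : HypSeq) (T : Text) : Prop :=
  ∃ n₀, ∀ n, n₀ ≤ n → ∃ e, p n = Part.some e ∧ Wset e = content T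

/-- `CInd`: every hypothesis output is a C-index. -/
def CIndRes (p : HypSeq) (_T : Text) : Prop :=
  ∀ i e, p i = Part.some e → CIndex e

/-- `T`: the always-true restriction. -/
def TrueRes (_p : HypSeq) (_T : Text) : Prop := True

abbrev InteractionOp := Learner → Text → HypSeq
abbrev Restriction := HypSeq → Text → Prop

/-- Conjunction of restrictions. -/
def andRes (δ δ' : Restriction) : Restriction := fun p T => δ p T ∧ δ' p T

/-- `h` `Txtβδ`-learns `L`: on every text for `L` the restriction `δ` holds. -/
def Learns (β : InteractionOp) (δ : Restriction) (h : Learner) (L : Set ℕ) : Prop :=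
  ∀ T : Text, content T = L → δ (β h T) T

/-- The restriction `α` holds for `h` on all texts whatsoever. -/
def OnAllTexts (β : InteractionOp) (α : Restriction) (h : Learner) : Prop :=
  ∀ T : Text, α (β h T) T

/-- A class of recursive languages. -/
def IsRecClass (ℒ : Set (Set ℕ)) : Prop := ∀ L ∈ ℒ, RecLang L

/-- `[𝒞Txtβδ]_REC`: classes of recursive languages learnable by some
learner from `C` under interaction operator `β` and restriction `δ`. -/
def LearnableREC (C : Learner → Prop) (β : InteractionOp) (δ : Restriction) :
    Set (Set (Set ℕ)) :=
  {ℒ | IsRecClass ℒ ∧ ∃ h, C h ∧ ∀ L ∈ ℒ, Learns β δ h L}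

/-- `[τ(α)𝒞Txtβδ]_REC`: as above, where additionally `α` must hold on
arbitrary texts. -/
def TauLearnableREC (C : Learner → Prop) (α : Restriction) (β : InteractionOp)
    (δ : Restriction) : Set (Set (Set ℕ)) :=
  {ℒ | IsRecClass ℒ ∧ ∃ h, C h ∧ OnAllTexts β α h ∧ ∀ L ∈ ℒ, Learns β δ h L}

/-! ### Auxiliary material for the proof -/

section Aux

open Nat.Partrec (Code)
open Nat.Partrec.Code Encodable

/-- The infinite language `ℕ \ {1}`. -/
def Ulang : Set ℕ := {x | x ≠ 1}

/-- The separating class: `Ulang` together with all finite sets containing `1`. -/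
def sepClass : Set (Set ℕ) :=
  insert Ulang {F : Set ℕ | F.Finite ∧ 1 ∈ F}

/-- decode a list code -/
def dec (n : ℕ) : List ℕ := (Encodable.decode (α := List ℕ) n).getD []

lemma dec_prim : Primrec dec :=
  Primrec.option_getD.comp Primrec.decode (Primrec.const [])

lemma dec_setCode (D : Finset ℕ) : dec (setCode D) = D.sort (· ≤ ·) := by
  simp [dec, setCode]

lemma mem_dec_setCode (D : Finset ℕ) (x : ℕ) : x ∈ dec (setCode D) ↔ x ∈ D := by
  rw [dec_setCode]; exact Finset.mem_sort _

lemma memPred_prim : PrimrecPred (fun p : ℕ × List ℕ => p.1 ∈ p.2) := by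
  have h : PrimrecPred (fun p : ℕ × List ℕ => p.2.idxOf p.1 < p.2.length) :=
    Primrec.nat_lt.comp (Primrec.list_idxOf.comp Primrec.fst Primrec.snd)
      (Primrec.list_length.comp Primrec.snd)
  exact h.of_eq fun p => by simp [List.idxOf_lt_length_iff]

lemma gFin_prim : Primrec fun m : ℕ =>
    (if m.unpair.2 ∈ dec m.unpair.1 then 1 else 0 : ℕ) := by
  apply Primrec.ite
  · exact memPred_prim.comp
      (Primrec.pair (Primrec.snd.comp Primrec.unpair) (dec_prim.comp (Primrec.fst.comp Primrec.unpair)))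
  · exact Primrec.const 1
  · exact Primrec.const 0

lemma exists_cFin : ∃ c : Code, ∀ m, c.eval m =
    Part.some (if m.unpair.2 ∈ dec m.unpair.1 then 1 else 0) := by
  have h1 : Nat.Partrec fun m : ℕ =>
      (Part.some (if m.unpair.2 ∈ dec m.unpair.1 then 1 else 0) : Part ℕ) :=
    Partrec.nat_iff.1 gFin_prim.to_comp
  obtain ⟨c, hc⟩ := exists_code.1 h1
  exact ⟨c, fun m => by rw [hc]⟩

lemma exists_cU : ∃ c : Code, ∀ x, c.eval x = Part.some (if x = 1 then 0 else 1) := by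
  have h1 : Nat.Partrec fun x : ℕ => (Part.some (if x = 1 then 0 else 1) : Part ℕ) := by
    refine Partrec.nat_iff.1 (Primrec.to_comp ?_)
    exact Primrec.ite (Primrec.eq.comp Primrec.id (Primrec.const 1)) (Primrec.const 0) (Primrec.const 1)
  obtain ⟨c, hc⟩ := exists_code.1 h1
  exact ⟨c, fun m => by rw [hc]⟩

noncomputable def cFin : Code := exists_cFin.choose
noncomputable def cU : Code := exists_cU.choose

lemma cFin_eval (m : ℕ) :
    cFin.eval m = Part.some (if m.unpair.2 ∈ dec m.unpair.1 then 1 else 0) :=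
  exists_cFin.choose_spec m

lemma cU_eval (x : ℕ) : cU.eval x = Part.some (if x = 1 then 0 else 1) :=
  exists_cU.choose_spec x

/-- The (total) set-driven learner, as a function `ℕ → ℕ`. -/
noncomputable def hf (n : ℕ) : ℕ :=
  if 1 ∈ dec n then Encodable.encode (cFin.curry n) else Encodable.encode cU

lemma hf_comp : Computable hf := by
  apply Primrec.to_comp
  apply Primrec.ite
  · exact memPred_prim.comp (Primrec.pair (Primrec.const 1) dec_prim)
  · exact Primrec.encode.comp (primrec₂_curry.comp (Primrec.const cFin) Primrec.id)
  · exact Primrec.const (Encodable.encode cU)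

/-- The set-driven learner as a `Learner`. -/
noncomputable def sdLearner : Learner := fun n => Part.some (hf n)

lemma sdLearner_partrec : PartComputable sdLearner := Partrec.nat_iff.1 hf_comp

lemma phi_encode (c : Code) : phi (Encodable.encode c) = c.eval := by
  simp [phi, Denumerable.ofNat_encode]

lemma cindex_cU : CIndex (Encodable.encode cU) := by
  intro x
  rw [phi_encode, cU_eval]
  by_cases h : x = 1 <;> simp [h]

lemma cset_cU : Cset (Encodable.encode cU) = Ulang := by
  ext x
  simp only [Cset, Set.mem_setOf_eq, phi_encode, cU_eval, Ulang]
  by_cases h : x = 1 <;> simp [h]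

lemma phi_curry_cFin (n x : ℕ) :
    phi (Encodable.encode (cFin.curry n)) x
      = Part.some (if x ∈ dec n then 1 else 0) := by
  rw [phi_encode, eval_curry, cFin_eval]
  simp

lemma cindex_curry (n : ℕ) : CIndex (Encodable.encode (cFin.curry n)) := by
  intro x
  rw [phi_curry_cFin]
  by_cases h : x ∈ dec n <;> simp [h]

lemma cset_curry (D : Finset ℕ) :
    Cset (Encodable.encode (cFin.curry (setCode D))) = ↑D := by
  ext x
  simp only [Cset, Set.mem_setOf_eq, phi_curry_cFin, Part.some_inj]
  rw [show ((if x ∈ dec (setCode D) then 1 else 0 : ℕ) = 1 ↔ x ∈ dec (setCode D)) by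
    by_cases h : x ∈ dec (setCode D) <;> simp [h]]
  rw [mem_dec_setCode]; simp

lemma mem_fincontent {T : Text} {n x : ℕ} :
    x ∈ fincontent T n ↔ ∃ m < n, T m = some x := by
  simp only [fincontent, List.mem_toFinset, List.mem_filterMap, id_eq, initSeg,
    List.mem_map, List.mem_range]
  constructor
  · rintro ⟨o, ⟨m, hm, rfl⟩, h⟩; exact ⟨m, hm, h⟩
  · rintro ⟨m, hm, h⟩; exact ⟨T m, ⟨m, hm, rfl⟩, h⟩

lemma fincontent_subset_content {T : Text} {n : ℕ} :
    ↑(fincontent T n) ⊆ content T := by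
  intro x hx
  rw [Finset.mem_coe, mem_fincontent] at hx
  obtain ⟨m, _, hm⟩ := hx
  exact ⟨m, hm⟩

/-- For a text of a finite language, the finite contents stabilize to the language. -/
lemma fincontent_stab {T : Text} {L : Set ℕ} (hL : L.Finite) (hT : content T = L) :
    ∃ N, ∀ n, N ≤ n → fincontent T n = hL.toFinset := by
  classical
  have hmem : ∀ y ∈ hL.toFinset, ∃ m, T m = some y := by
    intro y hy
    rw [Set.Finite.mem_toFinset] at hy
    rw [← hT] at hy
    exact hy
  set u : ℕ → ℕ := fun y => if hy : ∃ m, T m = some y then Nat.find hy else 0 with hu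
  refine ⟨(hL.toFinset.sup u) + 1, fun n hn => ?_⟩
  apply Finset.ext
  intro x
  rw [mem_fincontent, Set.Finite.mem_toFinset]
  constructor
  · rintro ⟨m, _, hm⟩
    have hx : x ∈ content T := ⟨m, hm⟩
    rwa [hT] at hx
  · intro hx
    have hx' : x ∈ hL.toFinset := Set.Finite.mem_toFinset hL |>.2 hx
    obtain ⟨m, hm⟩ := hmem x hx'
    have hex : ∃ m, T m = some x := ⟨m, hm⟩
    have hux : T (u x) = some x := by
      rw [hu]; simp only [dif_pos hex]
      exact Nat.find_spec hex
    refine ⟨u x, ?_, hux⟩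
    calc u x ≤ hL.toFinset.sup u := Finset.le_sup hx'
    _ < n := lt_of_lt_of_le (Nat.lt_succ_self _) hn

/-- The set-driven learner learns `Ulang`. -/
lemma sd_learns_U : Learns Sdop ExC sdLearner Ulang := by
  intro T hT
  have hnot1 : ∀ i, (1 : ℕ) ∉ fincontent T i := by
    intro i h1
    have := fincontent_subset_content (Finset.mem_coe.2 h1)
    rw [hT] at this
    exact this rfl
  have hval : ∀ i, Sdop sdLearner T i = Part.some (Encodable.encode cU) := by
    intro i
    simp only [Sdop, sdLearner, hf]
    rw [if_neg]
    rw [mem_dec_setCode]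
    exact hnot1 i
  refine ⟨0, fun n _ => by rw [hval, hval], Encodable.encode cU, hval 0, cindex_cU, ?_⟩
  rw [cset_cU, hT]

/-- The set-driven learner learns every finite language containing 1. -/
lemma sd_learns_fin {L : Set ℕ} (hFin : L.Finite) (h1 : 1 ∈ L) :
    Learns Sdop ExC sdLearner L := by
  intro T hT
  obtain ⟨N, hN⟩ := fincontent_stab hFin hT
  have hval : ∀ n, N ≤ n → Sdop sdLearner T n
      = Part.some (hf (setCode hFin.toFinset)) := by
    intro n hn
    simp only [Sdop, sdLearner]
    rw [hN n hn]
  refine ⟨N, fun n hn => by rw [hval n hn, hval N le_rfl], hf (setCode hFin.toFinset),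
    hval N le_rfl, ?_⟩
  have h1' : (1 : ℕ) ∈ dec (setCode hFin.toFinset) := by
    rw [mem_dec_setCode, Set.Finite.mem_toFinset]; exact h1
  rw [show hf (setCode hFin.toFinset)
      = Encodable.encode (cFin.curry (setCode hFin.toFinset)) from if_pos h1']
  refine ⟨cindex_curry _, ?_⟩
  rw [cset_curry, Set.Finite.coe_toFinset, hT]

end Aux


/-! ### The iterative side -/

section ItSide

variable (h : Learner)

/-- One step of the iterative learner. -/
def step (e x : ℕ) : Part ℕ :=
  h (Encodable.encode (some (e, some x) : Option (ℕ × Option ℕ)))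

/-- A pause-free text. -/
def ofFn (t : ℕ → ℕ) : Text := fun n => some (t n)

lemma itop_succ (T : Text) (i : ℕ) : Itop h T (i + 1) = (Itop h T i).bind
    (fun e => h (Encodable.encode (some (e, T i) : Option (ℕ × Option ℕ)))) := rfl

lemma itop_congr {T T' : Text} (i : ℕ) (hag : ∀ j < i, T j = T' j) :
    Itop h T i = Itop h T' i := by
  induction i with
  | zero => rfl
  | succ i ih =>
      rw [itop_succ, itop_succ, ih (fun j hj => hag j (lt_trans hj i.lt_succ_self)),
        hag i i.lt_succ_self]

/-- The state of the iterative learner after reading the list `l`. -/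
def St (l : List ℕ) : Part ℕ := Itop h (ofFn (fun n => l.getD n 0)) l.length

lemma itop_prefix {T : Text} {l : List ℕ} (hag : ∀ j < l.length, T j = some (l.getD j 0)) :
    Itop h T l.length = St h l :=
  itop_congr h l.length (fun j hj => by rw [hag j hj]; rfl)

lemma St_concat (l : List ℕ) (x : ℕ) :
    St h (l ++ [x]) = (St h l).bind (fun e => step h e x) := by
  have hlen : (l ++ [x]).length = l.length + 1 := by simp
  unfold St
  rw [hlen, itop_succ]
  have h1 : Itop h (ofFn fun n => (l ++ [x]).getD n 0) l.length = St h l := by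
    apply itop_prefix
    intro j hj
    simp only [ofFn]
    rw [List.getD_append _ _ _ _ hj]
  rw [h1]
  have h2 : (ofFn fun n => (l ++ [x]).getD n 0) l.length = some x := by
    simp only [ofFn]
    rw [List.getD_append_right _ _ _ _ le_rfl]
    simp
  rw [h2]
  rfl

lemma itop_some_le {T : Text} {n m e : ℕ} (hd : Itop h T n = Part.some e) (hmn : m ≤ n) :
    ∃ e', Itop h T m = Part.some e' := by
  induction n generalizing e with
  | zero => exact ⟨e, by rw [Nat.le_zero.1 hmn]; exact hd⟩
  | succ n ih =>
      rcases Nat.lt_or_ge m (n + 1) with hl | hg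
      · rw [itop_succ] at hd
        have he : e ∈ (Itop h T n).bind _ := Part.eq_some_iff.1 hd
        obtain ⟨a, ha, -⟩ := Part.mem_bind_iff.1 he
        exact ih (Part.eq_some_iff.2 ha) (Nat.lt_succ_iff.1 hl)
      · exact ⟨e, by rw [Nat.le_antisymm hmn hg]; exact hd⟩

/-- A convenient form of `ExC`-convergence. -/
lemma conv_of_learns {L : Set ℕ} {T : Text} (hL : Learns Itop ExC h L) (hT : content T = L) :
    ∃ n₀ e, (∀ n, n₀ ≤ n → Itop h T n = Part.some e) ∧ CIndex e ∧ Cset e = L := by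
  obtain ⟨n₀, hstab, e, he, hCi, hCs⟩ := hL T hT
  exact ⟨n₀, e, fun n hn => by rw [hstab n hn, he], hCi, by rw [hCs, hT]⟩

/-- Enumeration of `Ulang`. -/
def aenum (k : ℕ) : ℕ := if k = 0 then 0 else k + 1

lemma aenum_ne_one (k : ℕ) : aenum k ≠ 1 := by
  unfold aenum; split <;> omega

lemma aenum_surj {y : ℕ} (hy : y ≠ 1) : ∃ k, aenum k = y := by
  rcases Nat.eq_zero_or_pos y with rfl | hpos
  · exact ⟨0, rfl⟩
  · exact ⟨y - 1, by unfold aenum; split <;> omega⟩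

/-- A text for `Ulang` starting with the list `l`. -/
def textOf (l : List ℕ) : Text := fun n =>
  if n < l.length then some (l.getD n 0) else some (aenum (n - l.length))

lemma content_textOf {l : List ℕ} (hl : ∀ x ∈ l, x ≠ 1) : content (textOf l) = Ulang := by
  ext y
  constructor
  · rintro ⟨n, hn⟩
    unfold textOf at hn
    split at hn
    · next hlt =>
        have : l.getD n 0 = y := by injection hn
        subst this
        rw [List.getD_eq_getElem _ _ hlt]
        exact hl _ (List.getElem_mem hlt)
    · have : aenum (n - l.length) = y := by injection hn
      subst this
      exact aenum_ne_one _
  · intro hy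
    obtain ⟨k, hk⟩ := aenum_surj hy
    refine ⟨l.length + k, ?_⟩
    unfold textOf
    rw [if_neg (by omega)]
    rw [Nat.add_sub_cancel_left, hk]

lemma St_dom (HU : Learns Itop ExC h Ulang) {l : List ℕ} (hl : ∀ x ∈ l, x ≠ 1) :
    ∃ e, St h l = Part.some e := by
  obtain ⟨n₀, e, hconv, -, -⟩ := conv_of_learns h HU (content_textOf hl)
  obtain ⟨e', he'⟩ := itop_some_le h (hconv (max n₀ l.length) (le_max_left _ _))
    (le_max_right n₀ l.length)
  refine ⟨e', ?_⟩
  rw [← he']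
  symm
  apply itop_prefix
  intro j hj
  unfold textOf
  rw [if_pos hj]

/-- choose a state-changing datum, if one exists -/
noncomputable def pick0 (l : List ℕ) : ℕ :=
  Classical.epsilon fun x => x ≠ 1 ∧ ∀ e, St h l = Part.some e → step h e x ≠ Part.some e

noncomputable def pick (l : List ℕ) : ℕ :=
  if pick0 h l = 1 then 0 else pick0 h l

lemma pick_ne_one (l : List ℕ) : pick h l ≠ 1 := by
  unfold pick
  split
  · omega
  · next hne => exact hne

lemma pick_spec {l : List ℕ}
    (hc : ∃ x, x ≠ 1 ∧ ∀ e, St h l = Part.some e → step h e x ≠ Part.some e) :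
    ∀ e, St h l = Part.some e → step h e (pick h l) ≠ Part.some e := by
  have hp := Classical.epsilon_spec hc
  have h1 : pick h l = pick0 h l := by
    have hne : pick0 h l ≠ 1 := hp.1
    unfold pick
    rw [if_neg hne]
  rw [h1]
  exact hp.2

/-- The sink lemma: some state over `Ulang` absorbs all further `Ulang` data. -/
lemma sink (HU : Learns Itop ExC h Ulang) :
    ∃ l e, (∀ x ∈ l, x ≠ 1) ∧ St h l = Part.some e ∧
      ∀ x, x ≠ 1 → step h e x = Part.some e := by
  by_contra hcon
  push_neg at hcon
  classical
  have pick_works : ∀ l : List ℕ, (∀ x ∈ l, x ≠ 1) → ∀ e, St h l = Part.some e →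
      step h e (pick h l) ≠ Part.some e := by
    intro l hl e he
    obtain ⟨x, hx1, hxs⟩ := hcon l e hl he
    have hc : ∃ x, x ≠ 1 ∧ ∀ e', St h l = Part.some e' → step h e' x ≠ Part.some e' := by
      refine ⟨x, hx1, fun e' he' => ?_⟩
      have : e' = e := by
        have := he.symm.trans he'
        exact (Part.some_inj.1 this).symm
      rw [this]; exact hxs
    exact pick_spec h hc e he
  -- the adversary sequence of lists
  let seqL : ℕ → List ℕ := fun k => Nat.rec [] (fun k lk => lk ++ [pick h lk, aenum k]) k
  have seqL_succ : ∀ k, seqL (k + 1) = seqL k ++ [pick h (seqL k), aenum k] := fun k => rfl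
  have seqL_len : ∀ k, (seqL k).length = 2 * k := by
    intro k
    induction k with
    | zero => rfl
    | succ k ih => rw [seqL_succ, List.length_append, ih]; simp; omega
  have seqL_ne_one : ∀ k, ∀ x ∈ seqL k, x ≠ 1 := by
    intro k
    induction k with
    | zero => intro x hx; simp [seqL] at hx
    | succ k ih =>
        intro x hx
        rw [seqL_succ] at hx
        rcases List.mem_append.1 hx with hx | hx
        · exact ih x hx
        · simp at hx
          rcases hx with rfl | rfl
          · exact pick_ne_one h _
          · exact aenum_ne_one _
  have seqL_prefix : ∀ k m, k ≤ m → seqL k <+: seqL m := by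
    intro k m hkm
    induction m with
    | zero => rw [Nat.le_zero.1 hkm]
    | succ m ih =>
        rcases Nat.lt_or_ge k (m + 1) with hl | hg
        · refine (ih (Nat.lt_succ_iff.1 hl)).trans ?_
          rw [seqL_succ]
          exact ⟨_, rfl⟩
        · rw [Nat.le_antisymm hkm hg]
  have getD_of_prefix : ∀ {l₁ l₂ : List ℕ} {n : ℕ}, l₁ <+: l₂ → n < l₁.length →
      l₂.getD n 0 = l₁.getD n 0 := by
    intro l₁ l₂ n hp hn
    rw [List.getD_eq_getElem _ _ hn, List.getD_eq_getElem _ _ (hn.trans_le hp.length_le)]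
    exact (hp.getElem hn).symm
  -- the adversary text
  let t : ℕ → ℕ := fun n => (seqL (n + 1)).getD n 0
  have t_eq : ∀ k n, n < 2 * k → t n = (seqL k).getD n 0 := by
    intro k n hn
    have h1 : seqL (n + 1) <+: seqL (max (n + 1) k) :=
      seqL_prefix (n + 1) (max (n + 1) k) (le_max_left _ _)
    have h2 : seqL k <+: seqL (max (n + 1) k) :=
      seqL_prefix k (max (n + 1) k) (le_max_right _ _)
    have hn1 : n < (seqL (n + 1)).length := by have := seqL_len (n + 1); omega
    have hn2 : n < (seqL k).length := by have := seqL_len k; omega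
    show (seqL (n + 1)).getD n 0 = (seqL k).getD n 0
    rw [← getD_of_prefix h1 hn1, ← getD_of_prefix h2 hn2]
  have t_ne_one : ∀ n, t n ≠ 1 := by
    intro n
    have hn1 : n < (seqL (n + 1)).length := by have := seqL_len (n + 1); omega
    show (seqL (n + 1)).getD n 0 ≠ 1
    rw [List.getD_eq_getElem _ _ hn1]
    exact seqL_ne_one (n + 1) _ (List.getElem_mem hn1)
  have hcontent : content (ofFn t) = Ulang := by
    ext y
    constructor
    · rintro ⟨n, hn⟩
      have : t n = y := by injection hn
      subst this
      exact t_ne_one n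
    · intro hy
      obtain ⟨k, hk⟩ := aenum_surj hy
      refine ⟨2 * k + 1, ?_⟩
      show some (t (2 * k + 1)) = some y
      rw [t_eq (k + 1) (2 * k + 1) (by omega)]
      rw [seqL_succ, List.getD_append_right _ _ _ _ (by have := seqL_len k; omega)]
      rw [seqL_len]
      have h21 : 2 * k + 1 - 2 * k = 1 := by omega
      rw [h21]
      simp [hk]
  obtain ⟨n₀, e, hconv, -, -⟩ := conv_of_learns h HU hcontent
  set k := n₀ with hk
  have hA : Itop h (ofFn t) (2 * k) = Part.some e := hconv _ (by omega)
  have hB : Itop h (ofFn t) (2 * k + 1) = Part.some e := hconv _ (by omega)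
  have hStk : St h (seqL k) = Part.some e := by
    rw [← hA]
    symm
    have hlk : (2 : ℕ) * k = (seqL k).length := (seqL_len k).symm
    rw [hlk] at hA ⊢
    apply itop_prefix
    intro j hj
    show some (t j) = _
    rw [t_eq k j (by have := seqL_len k; omega)]
  have hStk1 : St h (seqL k ++ [pick h (seqL k)]) = Part.some e := by
    have hlen : (seqL k ++ [pick h (seqL k)]).length = 2 * k + 1 := by
      rw [List.length_append, seqL_len]; simp
    rw [← hB]
    symm
    rw [show (2 : ℕ) * k + 1 = (seqL k ++ [pick h (seqL k)]).length from hlen.symm]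
    apply itop_prefix
    intro j hj
    rw [hlen] at hj
    show some (t j) = _
    have hpre : seqL k ++ [pick h (seqL k)] <+: seqL (k + 1) := by
      rw [seqL_succ]
      refine ⟨[aenum k], ?_⟩
      simp
    rw [t_eq (k + 1) j (by omega)]
    rw [getD_of_prefix hpre (by omega)]
  rw [St_concat, hStk] at hStk1
  have : step h e (pick h (seqL k)) = Part.some e := by
    rw [← hStk1]
    simp [Part.bind_some]
  exact pick_works (seqL k) (seqL_ne_one k) e hStk this

lemma le_foldr_max (l : List ℕ) : ∀ x ∈ l, x ≤ l.foldr max 0 := by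
  induction l with
  | nil => simp
  | cons a l ih =>
      intro x hx
      rcases List.mem_cons.1 hx with rfl | hx
      · simp only [List.foldr_cons]
        exact le_max_left _ _
      · have hle := ih x hx
        simp only [List.foldr_cons]
        exact hle.trans (le_max_right _ _)

lemma itop_tail_eq {T₁ T₂ : Text} {m : ℕ} (hbase : Itop h T₁ m = Itop h T₂ m)
    (htail : ∀ j, m ≤ j → T₁ j = T₂ j) : ∀ n, m ≤ n → Itop h T₁ n = Itop h T₂ n := by
  intro n hn
  induction n, hn using Nat.le_induction with
  | base => exact hbase
  | succ n hn ih => rw [itop_succ, itop_succ, ih, htail n hn]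

/-- No iterative learner can learn the whole separating class. -/
lemma no_it_learner : ∀ hL : Learner, ¬ (∀ L ∈ sepClass, Learns Itop ExC hL L) := by
  intro h hlearn
  have HU : Learns Itop ExC h Ulang := hlearn _ (Set.mem_insert _ _)
  obtain ⟨l, e, hl, hSt, hsink⟩ := sink h HU
  set M := l.foldr max 0 with hM
  set a := M + 2 with ha
  set b := M + 3 with hb
  have ha1 : a ≠ 1 := by omega
  have hb1 : b ≠ 1 := by omega
  have hanl : a ∉ l := fun hmem => by have := le_foldr_max l a hmem; omega
  have hbnl : b ∉ l := fun hmem => by have := le_foldr_max l b hmem; omega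
  set len := l.length + 1 with hlen
  set c : ℕ → ℕ := fun n => (l ++ [1]).getD (n % len) 0 with hc
  -- the two trap texts
  set t₁ : ℕ → ℕ := fun n => if n = l.length then a else c n with ht₁
  set t₂ : ℕ → ℕ := fun n => if n = l.length then b else c n with ht₂
  have c_def : ∀ n, c n = (l ++ [1]).getD (n % len) 0 := fun _ => rfl
  have t₁_def : ∀ n, t₁ n = if n = l.length then a else c n := fun _ => rfl
  have t₂_def : ∀ n, t₂ n = if n = l.length then b else c n := fun _ => rfl
  have hclen : (l ++ [1]).length = len := by simp [hlen]
  have content_trap : ∀ (x : ℕ), x ≠ 1 →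
      content (ofFn (fun n => if n = l.length then x else c n))
        = insert 1 (insert x (↑l.toFinset : Set ℕ)) := by
    intro x hx
    ext y
    constructor
    · rintro ⟨n, hn⟩
      have hval : (if n = l.length then x else c n) = y := by injection hn
      by_cases hcase : n = l.length
      · rw [if_pos hcase] at hval
        subst hval
        exact Set.mem_insert_of_mem _ (Set.mem_insert _ _)
      · rw [if_neg hcase] at hval
        subst hval
        have hmod : n % len < (l ++ [1]).length := by
          rw [hclen]
          exact Nat.mod_lt _ (by omega)
        rw [c_def, List.getD_eq_getElem _ _ hmod]
        have hmem := List.getElem_mem hmod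
        rcases List.mem_append.1 hmem with hmem | hmem
        · refine Set.mem_insert_of_mem _ (Set.mem_insert_of_mem _ ?_)
          simpa using hmem
        · simp at hmem
          rw [hmem]
          exact Set.mem_insert _ _
    · intro hy
      rcases Set.mem_insert_iff.1 hy with rfl | hy
      · -- y = 1, appears at position 2 * len - 1
        refine ⟨2 * len - 1, ?_⟩
        show some (if _ = l.length then x else c _) = some 1
        rw [if_neg (by omega)]
        have hmod : (2 * len - 1) % len = l.length := by
          have h1 : 2 * len - 1 = len + l.length := by omega
          rw [h1, Nat.add_mod_left, Nat.mod_eq_of_lt (by omega)]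
        rw [c_def, hmod, List.getD_append_right _ _ _ _ le_rfl]
        simp
      rcases Set.mem_insert_iff.1 hy with rfl | hy
      · refine ⟨l.length, ?_⟩
        show some (if l.length = l.length then y else c l.length) = some y
        rw [if_pos rfl]
      · -- y ∈ l
        have hyl : y ∈ l := by simpa using hy
        obtain ⟨i, hi, rfl⟩ := List.mem_iff_getElem.1 hyl
        refine ⟨len + i, ?_⟩
        show some (if _ = l.length then x else c _) = _
        rw [if_neg (by omega)]
        have hmod : (len + i) % len = i := by
          rw [Nat.add_mod_left, Nat.mod_eq_of_lt (by omega)]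
        rw [c_def, hmod, List.getD_append _ _ _ _ hi, List.getD_eq_getElem _ _ hi]
  have hcont₁ : content (ofFn t₁) = insert 1 (insert a (↑l.toFinset : Set ℕ)) :=
    content_trap a ha1
  have hcont₂ : content (ofFn t₂) = insert 1 (insert b (↑l.toFinset : Set ℕ)) :=
    content_trap b hb1
  have mem₁ : insert 1 (insert a (↑l.toFinset : Set ℕ)) ∈ sepClass :=
    Set.mem_insert_of_mem _
      ⟨(l.toFinset.finite_toSet.insert a).insert 1, Set.mem_insert _ _⟩
  have mem₂ : insert 1 (insert b (↑l.toFinset : Set ℕ)) ∈ sepClass :=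
    Set.mem_insert_of_mem _
      ⟨(l.toFinset.finite_toSet.insert b).insert 1, Set.mem_insert _ _⟩
  obtain ⟨n₁, e₁, hconv₁, -, hCs₁⟩ := conv_of_learns h (hlearn _ mem₁) hcont₁
  obtain ⟨n₂, e₂, hconv₂, -, hCs₂⟩ := conv_of_learns h (hlearn _ mem₂) hcont₂
  -- both texts have the same state `e` after `len` steps
  have hbase : ∀ (t : ℕ → ℕ), (∀ j, j < l.length → t j = l.getD j 0) →
      t l.length ≠ 1 → Itop h (ofFn t) len = Part.some e := by
    intro t htj htne
    rw [hlen, itop_succ]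
    have h1 : Itop h (ofFn t) l.length = St h l := by
      apply itop_prefix
      intro j hj
      show some (t j) = some (l.getD j 0)
      rw [htj j hj]
    rw [h1, hSt, Part.bind_some]
    exact hsink _ htne
  have hprefix_c : ∀ j, j < l.length → c j = l.getD j 0 := by
    intro j hj
    rw [c_def, Nat.mod_eq_of_lt (by omega), List.getD_append _ _ _ _ hj]
  have hIt₁ : Itop h (ofFn t₁) len = Part.some e := by
    apply hbase
    · intro j hj
      rw [t₁_def, if_neg (by omega)]
      exact hprefix_c j hj
    · rw [t₁_def, if_pos rfl]
      exact ha1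
  have hIt₂ : Itop h (ofFn t₂) len = Part.some e := by
    apply hbase
    · intro j hj
      rw [t₂_def, if_neg (by omega)]
      exact hprefix_c j hj
    · rw [t₂_def, if_pos rfl]
      exact hb1
  have htail : ∀ j, len ≤ j → ofFn t₁ j = ofFn t₂ j := by
    intro j hj
    show some (t₁ j) = some (t₂ j)
    rw [t₁_def, t₂_def, if_neg (by omega), if_neg (by omega)]
  have heq : ∀ n, len ≤ n → Itop h (ofFn t₁) n = Itop h (ofFn t₂) n :=
    itop_tail_eq h (hIt₁.trans hIt₂.symm) htail
  set N := max (max n₁ n₂) len with hN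
  have h1 : Itop h (ofFn t₁) N = Part.some e₁ := hconv₁ N (by omega)
  have h2 : Itop h (ofFn t₂) N = Part.some e₂ := hconv₂ N (by omega)
  have hee : e₁ = e₂ := by
    have := (h1.symm.trans (heq N (by omega))).trans h2
    exact Part.some_inj.1 this
  have haL₁ : a ∈ Cset e₁ := by
    rw [hCs₁]
    exact Set.mem_insert_of_mem _ (Set.mem_insert _ _)
  have haL₂ : a ∈ insert 1 (insert b (↑l.toFinset : Set ℕ)) := by
    rw [← hCs₂, ← hee]
    exact haL₁
  rcases Set.mem_insert_iff.1 haL₂ with h' | h'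
  · omega
  rcases Set.mem_insert_iff.1 h' with h' | h'
  · omega
  · exact hanl (by simpa using h')

end ItSide

/-- There is a class of recursive languages in `[TxtSdEx_C]_REC` but not in
`[TxtItEx_C]_REC`. -/

theorem sd_exC_not_it_exC :
    ∃ ℒ : Set (Set ℕ),
      ℒ ∈ LearnableREC PartComputable Sdop ExC ∧
      ℒ ∉ LearnableREC PartComputable Itop ExC := by
  refine ⟨sepClass, ⟨?_, sdLearner, sdLearner_partrec, ?_⟩, ?_⟩
  · -- IsRecClass
    intro L hLmem
    rcases Set.mem_insert_iff.1 hLmem with rfl | hm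
    · refine ⟨fun x => decide (x ≠ 1), ?_, fun x => by simp [Ulang]⟩
      have hp : Primrec fun x : ℕ => decide (x = 1) :=
        (Primrec.eq.comp Primrec.id (Primrec.const 1)).decide
      exact Primrec.to_comp ((Primrec.not.comp hp).of_eq fun x => by simp [decide_not])
    · obtain ⟨hFin, h1⟩ := hm
      refine ⟨fun x => decide (x ∈ hFin.toFinset.sort (· ≤ ·)), ?_, fun x => ?_⟩
      · refine Primrec.to_comp ?_
        exact (memPred_prim.comp (Primrec.pair Primrec.id (Primrec.const _))).decide
      · simp only [decide_eq_true_eq, Finset.mem_sort, Set.Finite.mem_toFinset]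
  · -- the Sd learner learns each language
    intro L hLmem
    rcases Set.mem_insert_iff.1 hLmem with rfl | hm
    · exact sd_learns_U
    · exact sd_learns_fin hm.1 hm.2
  · -- not iteratively learnable
    rintro ⟨-, hL, -, hlearn⟩
    exact no_it_learner hL hlearn

end InductiveInference
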